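/- Let N ≥ 1 be a natural number, w = exp(2πi/N), and s ∈ {1,…,N}. Let x be the sequence with x_s = 1 and x_i = 0 for i ≠ s. Let U be the N × N matrix with entries U_{jk} = (1/√N) · w^{(k−1)·j} for j,k ∈ {1,…,N}, and let F be the N × N matrix with entries F_{jk} = x_{(j+k−1) mod N} (index reduced cyclically into {1,…,N}). Let u ∈ ℂ^N be the uniform superposition vector with every entry equal to 1/√N. Then F(Uu) = e_j, where j ∈ {1,…,N} is the unique index with j ≡ s + 1 (mod N) and e_j is the j-th standard basis vector of ℂ^N; in particular, the marked position s is recovered from the measured index j as the unique element of {1,…,N} congruent to j − 1 modulo N. -/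

import Mathlib

open Complex

/-- The `N`-th root of unity `w = exp(2πi/N)`. -/
noncomputable def rootN (N : ℕ) : ℂ := Complex.exp (2 * Real.pi * Complex.I / N)

/-- running QCPA on the uniform superposition `u = (1/√N,…,1/√N)ᵀ`
yields `F(Uu) = e_j` where `j ≡ s + 1 (mod N)`; in particular the marked position
`s` is the unique element of `{1,…,N}` congruent to `j - 1` modulo `N`. -/
theorem stmt10 (N : ℕ) [NeZero N] (s : ℕ) (hs : s ∈ Finset.Icc 1 N)
    (x : ℕ → ℂ) (hx : ∀ i, x i = if i = s then 1 else 0)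
    (U : Matrix (Fin N) (Fin N) ℂ)
    (hU : ∀ j k : Fin N,
      U j k = (1 / (Real.sqrt N : ℂ)) * (rootN N) ^ (k.val * (j.val + 1)))
    (F : Matrix (Fin N) (Fin N) ℂ)
    (hF : ∀ j k : Fin N, F j k = x ((j.val + k.val) % N + 1))
    (u : Fin N → ℂ) (hu : ∀ i, u i = 1 / (Real.sqrt N : ℂ)) :
    ∀ j : Fin N, ((j.val : ℤ) + 1) ≡ (s : ℤ) + 1 [ZMOD (N : ℤ)] →
      (F.mulVec (U.mulVec u) = fun i => if i = j then 1 else 0) ∧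
      (s : ℤ) ≡ ((j.val : ℤ) + 1) - 1 [ZMOD (N : ℤ)] := by
  intro j hj
  have hN : N ≠ 0 := NeZero.ne N
  have hN1 : 1 ≤ N := Nat.one_le_iff_ne_zero.mpr hN
  obtain ⟨hs1, hsN⟩ := Finset.mem_Icc.mp hs
  have hζ : IsPrimitiveRoot (rootN N) N := Complex.isPrimitiveRoot_exp N hN
  -- part 2
  have part2 : (s : ℤ) ≡ ((j.val : ℤ) + 1) - 1 [ZMOD (N : ℤ)] := by
    have := (hj.sub_right 1).symm
    simpa using this
  refine ⟨?_, part2⟩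
  -- j.val = s % N
  have hjs : j.val = s % N := by
    have h1 : (j.val : ℤ) % N = (s : ℤ) % N := by
      have := hj.sub_right 1
      simpa [Int.ModEq] using this
    have h2 : (j.val : ℤ) % N = j.val := Int.emod_eq_of_lt (by positivity) (by exact_mod_cast j.isLt)
    have h3 : ((s : ℤ)) % N = ((s % N : ℕ) : ℤ) := (Int.natCast_mod s N).symm
    have := h2 ▸ h3 ▸ h1
    exact_mod_cast this
  -- √N facts
  have hsq : (Real.sqrt N : ℂ) * (Real.sqrt N : ℂ) = (N : ℂ) := by
    norm_cast
    exact Real.mul_self_sqrt (Nat.cast_nonneg N)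
  have hNC : (N : ℂ) ≠ 0 := Nat.cast_ne_zero.mpr hN
  have hsqne : (Real.sqrt N : ℂ) ≠ 0 := fun h => hNC (by rw [← hsq, h, mul_zero])
  -- Uu = e_{N-1}
  have hv : U.mulVec u = fun i : Fin N => if i.val = N - 1 then 1 else 0 := by
    funext i
    have hterm : ∀ k : Fin N,
        U i k * u k = (1 / (N : ℂ)) * ((rootN N) ^ (i.val + 1)) ^ k.val := by
      intro k
      have hc : (1 / (Real.sqrt N : ℂ)) * (1 / (Real.sqrt N : ℂ)) = 1 / (N : ℂ) := by
        rw [div_mul_div_comm, one_mul, hsq]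
      rw [hU, hu, pow_mul', mul_right_comm, hc]
    simp only [Matrix.mulVec, dotProduct, hterm, ← Finset.mul_sum]
    rw [Fin.sum_univ_eq_sum_range (fun k => ((rootN N) ^ (i.val + 1)) ^ k)]
    by_cases hi : i.val = N - 1
    · have hpow : (rootN N) ^ (i.val + 1) = 1 := by
        have : i.val + 1 = N := by omega
        rw [this, hζ.pow_eq_one]
      rw [hpow]
      simp [hi, hNC]
    · have hlt : i.val + 1 < N := by have := i.isLt; omega
      have hne : (rootN N) ^ (i.val + 1) ≠ 1 :=
        hζ.pow_ne_one_of_pos_of_lt (Nat.succ_ne_zero _) hlt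
      rw [geom_sum_eq hne]
      have : ((rootN N) ^ (i.val + 1)) ^ N = 1 := by
        rw [← pow_mul, mul_comm, pow_mul, hζ.pow_eq_one, one_pow]
      rw [this]
      simp [hi]
  rw [hv]
  funext i
  have hNlt : N - 1 < N := by omega
  have hcond : ∀ k : Fin N, (k.val = N - 1) ↔ (k = ⟨N - 1, hNlt⟩) := by
    intro k; rw [Fin.ext_iff]
  simp only [Matrix.mulVec, dotProduct]
  rw [Finset.sum_eq_single (⟨N - 1, hNlt⟩ : Fin N)]
  · have hfin : ((⟨N - 1, hNlt⟩ : Fin N) : ℕ) = N - 1 := rfl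
    simp only [hF, hx, hfin, if_pos, mul_one]
    have hmod : (i.val + (N - 1)) % N = if i.val = 0 then N - 1 else i.val - 1 := by
      split_ifs with h0
      · rw [h0, zero_add, Nat.mod_eq_of_lt hNlt]
      · have he : i.val + (N - 1) = (i.val - 1) + N := by omega
        rw [he, Nat.add_mod_right, Nat.mod_eq_of_lt (by have := i.isLt; omega)]
    have hsmod : s % N = if s = N then 0 else s := by
      split_ifs with hsn
      · simp [hsn]
      · exact Nat.mod_eq_of_lt (by omega)
    have hiff : ((if i.val = 0 then N - 1 else i.val - 1) + 1 = s) ↔ (i = j) := by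
      rw [Fin.ext_iff, hjs, hsmod]
      have := i.isLt
      split_ifs with h0 hsn hsn <;> omega
    rw [hmod, if_congr hiff rfl rfl]
  · intro b _ hb
    have : ¬ (b.val = N - 1) := fun h => hb ((hcond b).mp h)
    simp [this]
  · intro h; exact absurd (Finset.mem_univ _) h
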